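/- Let (η_i) be i.i.d. Bernoulli(1/2) and let T^{k−1}, T^k be the first-occurrence times of the patterns I_{k−1} and I_k (I_j = (1,…,1,0) of length ℓ_j, ℓ_{k−1} < ℓ_k). Then for every t ≥ ℓ_k, P(T^{k−1} = T^k = t) = β_k^{−1} P(T^{k−1} > t − ℓ_k), where β_k = 2^{ℓ_k}. Consequently P(T^{k−1} = T^k) = β_k^{−1} E[T^{k−1}]. -/

import Mathlib

open MeasureTheory

/-- First time `j ≥ ℓ` such that the window `(j-ℓ+1,…,j)` equals the word `I_ℓ`
of `ℓ-1` ones followed by a zero. -/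
noncomputable def firstOcc (ℓ : ℕ) (e : ℕ → Bool) : ℕ :=
  sInf {j | ℓ ≤ j ∧ ∀ i < ℓ, e (j - ℓ + 1 + i) = decide (i < ℓ - 1)}

namespace Stmt6

def occAt (ℓ : ℕ) (e : ℕ → Bool) (j : ℕ) : Prop :=
  ℓ ≤ j ∧ ∀ i < ℓ, e (j - ℓ + 1 + i) = decide (i < ℓ - 1)

lemma nat_sInf_eq_iff {S : Set ℕ} {t : ℕ} :
    sInf S = t ↔ (t ∈ S ∧ ∀ j < t, j ∉ S) ∨ (S = ∅ ∧ t = 0) := by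
  constructor
  · rintro rfl
    rcases S.eq_empty_or_nonempty with h | h
    · right; simp [h]
    · left; exact ⟨Nat.sInf_mem h, fun j hj => Nat.notMem_of_lt_sInf hj⟩
  · rintro (⟨ht, hlt⟩ | ⟨rfl, rfl⟩)
    · refine le_antisymm (Nat.sInf_le ht) ?_
      by_contra h
      push_neg at h
      exact hlt _ h (Nat.sInf_mem ⟨t, ht⟩)
    · exact Nat.sInf_empty

lemma firstOcc_eq_sInf (ℓ : ℕ) (e : ℕ → Bool) :
    firstOcc ℓ e = sInf {j | occAt ℓ e j} := rfl

lemma firstOcc_eq_iff {ℓ t : ℕ} {e : ℕ → Bool} (ht : 1 ≤ t) :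
    firstOcc ℓ e = t ↔ occAt ℓ e t ∧ ∀ j < t, ¬ occAt ℓ e j := by
  rw [firstOcc_eq_sInf, nat_sInf_eq_iff]
  constructor
  · rintro (⟨h1, h2⟩ | ⟨_, rfl⟩)
    · exact ⟨h1, h2⟩
    · omega
  · exact fun h => Or.inl h

lemma firstOcc_eq_zero_iff {ℓ : ℕ} (hℓ : 1 ≤ ℓ) {e : ℕ → Bool} :
    firstOcc ℓ e = 0 ↔ ∀ j, ¬ occAt ℓ e j := by
  rw [firstOcc_eq_sInf, nat_sInf_eq_iff]
  constructor
  · rintro (⟨h1, _⟩ | ⟨h, _⟩)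
    · exact absurd h1.1 (by omega)
    · intro j hj; rw [Set.eq_empty_iff_forall_notMem] at h; exact h j hj
  · intro h; right
    exact ⟨Set.eq_empty_iff_forall_notMem.2 h, rfl⟩

lemma firstOcc_gt_iff {ℓ m : ℕ} {e : ℕ → Bool} :
    m < firstOcc ℓ e ↔ (∃ j, occAt ℓ e j) ∧ ∀ j ≤ m, ¬ occAt ℓ e j := by
  rw [firstOcc_eq_sInf]
  constructor
  · intro h
    have hne : {j | occAt ℓ e j}.Nonempty := by
      by_contra hc
      rw [Set.not_nonempty_iff_eq_empty] at hc
      rw [hc, Nat.sInf_empty] at h; omega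
    exact ⟨hne, fun j hj => Nat.notMem_of_lt_sInf (lt_of_le_of_lt hj h)⟩
  · rintro ⟨⟨j, hj⟩, h⟩
    by_contra hc
    push_neg at hc
    exact h _ hc (Nat.sInf_mem (⟨j, hj⟩ : Set.Nonempty {j | occAt ℓ e j}))

lemma occAt_mono {ℓ' ℓ j : ℕ} {e : ℕ → Bool} (h1 : 1 ≤ ℓ') (hle : ℓ' ≤ ℓ)
    (h : occAt ℓ e j) : occAt ℓ' e j := by
  obtain ⟨hj, hw⟩ := h
  refine ⟨by omega, fun i hi => ?_⟩
  have := hw (i + (ℓ - ℓ')) (by omega)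
  have harg : j - ℓ + 1 + (i + (ℓ - ℓ')) = j - ℓ' + 1 + i := by omega
  rw [harg] at this
  rw [this]
  rw [decide_eq_decide]
  omega

lemma not_occAt_interior {ℓ₁ ℓ₂ t j : ℕ} {e : ℕ → Bool} (h1 : 1 ≤ ℓ₁)
    (h : occAt ℓ₂ e t) (hj1 : t - ℓ₂ < j) (hj2 : j < t) : ¬ occAt ℓ₁ e j := by
  rintro ⟨hℓj, hw⟩
  have hend := hw (ℓ₁ - 1) (by omega)
  have harg : j - ℓ₁ + 1 + (ℓ₁ - 1) = j := by omega
  rw [harg] at hend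
  have ht2 := h.1
  have hint := h.2 (j - (t - ℓ₂ + 1)) (by omega)
  have harg2 : t - ℓ₂ + 1 + (j - (t - ℓ₂ + 1)) = j := by omega
  rw [harg2] at hint
  rw [hint, decide_eq_decide] at hend
  omega

lemma occAt_congr {ℓ j : ℕ} {e e' : ℕ → Bool} (h : ∀ m ≤ j, e m = e' m)
    (ho : occAt ℓ e j) : occAt ℓ e' j := by
  obtain ⟨h1, h2⟩ := ho
  refine ⟨h1, fun i hi => ?_⟩
  rw [← h _ (by omega)]
  exact h2 i hi

lemma occAt_iff_window {ℓ j : ℕ} {e : ℕ → Bool} (h1 : 1 ≤ ℓ) (hj : ℓ ≤ j) :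
    occAt ℓ e j ↔ ∀ m ∈ Finset.Ioc (j - ℓ) j, e m = decide (m < j) := by
  constructor
  · rintro ⟨-, hw⟩ m hm
    rw [Finset.mem_Ioc] at hm
    have := hw (m - (j - ℓ + 1)) (by omega)
    have harg : j - ℓ + 1 + (m - (j - ℓ + 1)) = m := by omega
    rw [harg] at this
    rw [this, decide_eq_decide]
    omega
  · intro h
    refine ⟨hj, fun i hi => ?_⟩
    have := h (j - ℓ + 1 + i) (by rw [Finset.mem_Ioc]; omega)
    rw [this, decide_eq_decide]
    omega

lemma both_eq_iff {ℓ₁ ℓ₂ t : ℕ} {e : ℕ → Bool} (h1 : 1 ≤ ℓ₁) (h12 : ℓ₁ < ℓ₂)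
    (ht : ℓ₂ ≤ t) :
    (firstOcc ℓ₁ e = t ∧ firstOcc ℓ₂ e = t) ↔
      ((∀ j ≤ t - ℓ₂, ¬ occAt ℓ₁ e j) ∧ occAt ℓ₂ e t) := by
  have ht1 : 1 ≤ t := by omega
  rw [firstOcc_eq_iff ht1, firstOcc_eq_iff ht1]
  constructor
  · rintro ⟨⟨ho1, hn1⟩, ⟨ho2, hn2⟩⟩
    exact ⟨fun j hj => hn1 j (by omega), ho2⟩
  · rintro ⟨hA, hW⟩
    have hn1 : ∀ j < t, ¬ occAt ℓ₁ e j := by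
      intro j hj
      rcases le_or_gt j (t - ℓ₂) with h | h
      · exact hA j h
      · exact not_occAt_interior h1 hW h hj
    exact ⟨⟨occAt_mono h1 (by omega) hW, hn1⟩,
      ⟨hW, fun j hj hc => hn1 j hj (occAt_mono h1 (by omega) hc)⟩⟩

section Meas

variable {Ω : Type} [MeasurableSpace Ω] (μ : Measure Ω) [IsProbabilityMeasure μ]
  (η : ℕ → Ω → Bool)

def cyl (s : Finset ℕ) (b : ℕ → Bool) : Set Ω := {ω | ∀ i ∈ s, η i ω = b i}

def ext (s : Finset ℕ) (b : ↥s → Bool) : ℕ → Bool :=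
  fun i => if h : i ∈ s then b ⟨i, h⟩ else false

def DependsOn (P : (ℕ → Bool) → Prop) (s : Finset ℕ) : Prop :=
  ∀ e e' : ℕ → Bool, (∀ i ∈ s, e i = e' i) → P e → P e'

variable (hmeas : ∀ i, Measurable (η i))
  (hiid : ∀ (s : Finset ℕ) (b : ℕ → Bool),
      μ {ω | ∀ i ∈ s, η i ω = b i} = (1 / 2 : ENNReal) ^ s.card)

set_option linter.unusedSectionVars false
attribute [local instance] Classical.propDecidable

include hiid in
lemma mu_cyl (s : Finset ℕ) (b : ℕ → Bool) :
    μ (cyl η s b) = (1 / 2 : ENNReal) ^ s.card := hiid s b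

include hmeas in
lemma measurableSet_cyl (s : Finset ℕ) (b : ℕ → Bool) : MeasurableSet (cyl η s b) := by
  have : cyl η s b = ⋂ i ∈ s, (η i) ⁻¹' {b i} := by
    ext ω; simp [cyl]
  rw [this]
  exact MeasurableSet.biInter s.countable_toSet
    (fun i _ => hmeas i (measurableSet_singleton _))

lemma cyl_disjoint {s : Finset ℕ} {b b' : ↥s → Bool} (h : b ≠ b') :
    Disjoint (cyl η s (ext s b)) (cyl η s (ext s b')) := by
  rw [Set.disjoint_left]
  intro ω hω hω'
  apply h
  funext i
  have h1 := hω i.1 i.2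
  have h2 := hω' i.1 i.2
  rw [h1] at h2
  simpa [ext] using h2

lemma iUnion_cyl (s : Finset ℕ) : ⋃ b : ↥s → Bool, cyl η s (ext s b) = Set.univ := by
  ext ω
  simp only [Set.mem_iUnion, Set.mem_univ, iff_true]
  refine ⟨fun i => η i.1 ω, fun i hi => ?_⟩
  simp [ext, hi]

include hmeas in
lemma mu_eq_sum_cyl (s : Finset ℕ) {X : Set Ω} (hX : MeasurableSet X) :
    μ X = ∑ b : ↥s → Bool, μ (X ∩ cyl η s (ext s b)) := by
  have hrw : X = ⋃ b : ↥s → Bool, X ∩ cyl η s (ext s b) := by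
    rw [← Set.inter_iUnion, iUnion_cyl, Set.inter_univ]
  have hd : Pairwise (Function.onFun Disjoint fun b : ↥s → Bool => X ∩ cyl η s (ext s b)) := by
    intro b b' hbb'
    exact Set.disjoint_of_subset Set.inter_subset_right Set.inter_subset_right
      (cyl_disjoint η hbb')
  nth_rewrite 1 [hrw]
  rw [measure_iUnion hd (fun b => hX.inter (measurableSet_cyl η hmeas s _))]
  exact tsum_fintype _

lemma inter_cyl_of_dep {P : (ℕ → Bool) → Prop} {s : Finset ℕ} (hP : DependsOn P s)
    (b : ↥s → Bool) :
    {ω | P (fun i => η i ω)} ∩ cyl η s (ext s b)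
      = if P (ext s b) then cyl η s (ext s b) else ∅ := by
  have key : ∀ ω ∈ cyl η s (ext s b), (P (fun i => η i ω) ↔ P (ext s b)) := by
    intro ω hω
    exact ⟨hP _ _ (fun i hi => hω i hi), hP _ _ (fun i hi => (hω i hi).symm)⟩
  ext ω
  constructor
  · rintro ⟨hPω, hc⟩
    rw [if_pos ((key ω hc).1 hPω)]
    exact hc
  · intro hω
    by_cases h : P (ext s b)
    · rw [if_pos h] at hω
      exact ⟨(key ω hω).2 h, hω⟩
    · rw [if_neg h] at hω
      exact absurd hω (Set.notMem_empty ω)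

include hmeas in
lemma measurableSet_dep {P : (ℕ → Bool) → Prop} {s : Finset ℕ} (hP : DependsOn P s) :
    MeasurableSet {ω | P (fun i => η i ω)} := by
  have : {ω | P (fun i => η i ω)}
      = ⋃ b : ↥s → Bool, ({ω | P (fun i => η i ω)} ∩ cyl η s (ext s b)) := by
    rw [← Set.inter_iUnion, iUnion_cyl, Set.inter_univ]
  rw [this]
  refine MeasurableSet.iUnion fun b => ?_
  rw [inter_cyl_of_dep η hP b]
  split
  · exact measurableSet_cyl η hmeas s _
  · exact MeasurableSet.empty

lemma cyl_inter_cyl {s u : Finset ℕ} (hd : Disjoint s u) (d c : ℕ → Bool) :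
    cyl η s d ∩ cyl η u c = cyl η (s ∪ u) (fun i => if i ∈ s then d i else c i) := by
  ext ω
  constructor
  · rintro ⟨h1, h2⟩ i hi
    rw [Finset.mem_union] at hi
    rcases hi with hi | hi
    · show η i ω = if i ∈ s then d i else c i
      rw [if_pos hi]; exact h1 i hi
    · show η i ω = if i ∈ s then d i else c i
      rw [if_neg (Finset.disjoint_right.1 hd hi)]; exact h2 i hi
  · intro h
    constructor
    · intro i hi
      have := h i (Finset.mem_union_left _ hi)
      simpa only [if_pos hi] using this
    · intro i hi
      have := h i (Finset.mem_union_right _ hi)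
      simpa only [if_neg (Finset.disjoint_right.1 hd hi)] using this

include hmeas hiid in
lemma mu_inter_cyl {s u : Finset ℕ} (hd : Disjoint s u) {P : (ℕ → Bool) → Prop}
    (hP : DependsOn P s) (c : ℕ → Bool) :
    μ ({ω | P (fun i => η i ω)} ∩ cyl η u c)
      = μ {ω | P (fun i => η i ω)} * (1 / 2 : ENNReal) ^ u.card := by
  have hX : MeasurableSet {ω | P (fun i => η i ω)} := measurableSet_dep η hmeas hP
  have hXc : MeasurableSet ({ω | P (fun i => η i ω)} ∩ cyl η u c) :=
    hX.inter (measurableSet_cyl η hmeas u c)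
  rw [mu_eq_sum_cyl μ η hmeas s hXc, mu_eq_sum_cyl μ η hmeas s hX, Finset.sum_mul]
  refine Finset.sum_congr rfl fun b _ => ?_
  have h1 : {ω | P (fun i => η i ω)} ∩ cyl η u c ∩ cyl η s (ext s b)
      = ({ω | P (fun i => η i ω)} ∩ cyl η s (ext s b)) ∩ cyl η u c := by
    rw [Set.inter_right_comm]
  rw [h1, inter_cyl_of_dep η hP b]
  by_cases h : P (ext s b)
  · rw [if_pos h, cyl_inter_cyl η hd]
    show μ _ = μ (cyl η s (ext s b)) * _
    rw [mu_cyl μ η hiid, mu_cyl μ η hiid, Finset.card_union_of_disjoint hd, pow_add]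
  · rw [if_neg h]
    simp

include hmeas hiid in
lemma mu_Pno {ℓ : ℕ} (hℓ : 1 ≤ ℓ) (N : ℕ) :
    μ {ω | ∀ n < N, ¬ occAt ℓ (fun i => η i ω) ((n + 1) * ℓ)}
      = (1 - (1 / 2 : ENNReal) ^ ℓ) ^ N := by
  induction N with
  | zero => simp
  | succ N ih =>
    have hdep : DependsOn (fun e => ∀ n < N, ¬ occAt ℓ e ((n + 1) * ℓ))
        (Finset.range (N * ℓ + 1)) := by
      intro e e' hag hPe n hn hocc
      refine hPe n hn (occAt_congr (fun m hm => ?_) hocc)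
      have hle : (n + 1) * ℓ ≤ N * ℓ := Nat.mul_le_mul_right ℓ (by omega)
      exact (hag m (Finset.mem_range.2 (by omega))).symm
    set X := {ω | ∀ n < N, ¬ occAt ℓ (fun i => η i ω) ((n + 1) * ℓ)} with hXdef
    have hX : MeasurableSet X := measurableSet_dep η hmeas hdep
    have hdisj : Disjoint (Finset.range (N * ℓ + 1)) (Finset.Ioc (N * ℓ) ((N + 1) * ℓ)) := by
      rw [Finset.disjoint_left]
      intro x hx hx'
      rw [Finset.mem_range] at hx
      rw [Finset.mem_Ioc] at hx'
      omega
    have hO : {ω | occAt ℓ (fun i => η i ω) ((N + 1) * ℓ)}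
        = cyl η (Finset.Ioc (N * ℓ) ((N + 1) * ℓ)) (fun m => decide (m < (N + 1) * ℓ)) := by
      ext ω
      have h1 : ℓ ≤ (N + 1) * ℓ := by nlinarith
      have h2 : (N + 1) * ℓ - ℓ = N * ℓ := by rw [Nat.succ_mul]; omega
      rw [Set.mem_setOf_eq, occAt_iff_window hℓ h1, h2]
      rfl
    have hsplit : {ω | ∀ n < N + 1, ¬ occAt ℓ (fun i => η i ω) ((n + 1) * ℓ)}
        = X \ (X ∩ cyl η (Finset.Ioc (N * ℓ) ((N + 1) * ℓ))
            (fun m => decide (m < (N + 1) * ℓ))) := by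
      ext ω
      simp only [Set.mem_diff, Set.mem_inter_iff, Set.mem_setOf_eq, hXdef, ← hO,
        Set.mem_setOf_eq, not_and]
      constructor
      · intro h
        refine ⟨fun n hn => h n (by omega), fun hX' => h N (by omega)⟩
      · rintro ⟨h1, h2⟩ n hn
        rcases Nat.lt_succ_iff_lt_or_eq.1 hn with h | rfl
        · exact h1 n h
        · exact h2 h1
    have hcard : (Finset.Ioc (N * ℓ) ((N + 1) * ℓ)).card = ℓ := by
      rw [Nat.card_Ioc, Nat.succ_mul]; omega
    rw [hsplit, measure_diff Set.inter_subset_left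
        ((hX.inter (measurableSet_cyl η hmeas _ _)).nullMeasurableSet)
        (measure_ne_top μ _),
      mu_inter_cyl μ η hmeas hiid hdisj hdep, hcard, ih, pow_succ]
    rw [ENNReal.mul_sub (fun _ _ => ENNReal.pow_ne_top (by norm_num)), mul_one]

include hmeas hiid in
lemma mu_noOcc {ℓ : ℕ} (hℓ : 1 ≤ ℓ) :
    μ {ω | ∀ j, ¬ occAt ℓ (fun i => η i ω) j} = 0 := by
  have hsub : ∀ N : ℕ, μ {ω | ∀ j, ¬ occAt ℓ (fun i => η i ω) j}
      ≤ (1 - (1 / 2 : ENNReal) ^ ℓ) ^ N := by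
    intro N
    rw [← mu_Pno μ η hmeas hiid hℓ N]
    exact measure_mono (fun ω hω n _ => hω _)
  have hlt : (1 - (1 / 2 : ENNReal) ^ ℓ) < 1 :=
    ENNReal.sub_lt_self ENNReal.one_ne_top one_ne_zero
      (pow_ne_zero _ (by norm_num))
  have htend := ENNReal.tendsto_pow_atTop_nhds_zero_of_lt_one hlt
  exact le_antisymm (ge_of_tendsto' htend hsub) zero_le

include hmeas in
lemma measurableSet_occAt (ℓ j : ℕ) :
    MeasurableSet {ω | occAt ℓ (fun i => η i ω) j} := by
  have : {ω | occAt ℓ (fun i => η i ω) j}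
      = {ω | ℓ ≤ j} ∩ ⋂ (i : ℕ) (_ : i < ℓ),
          (η (j - ℓ + 1 + i)) ⁻¹' {decide (i < ℓ - 1)} := by
    ext ω
    simp [occAt, Set.mem_iInter]
  rw [this]
  refine MeasurableSet.inter (MeasurableSet.const _) ?_
  exact MeasurableSet.iInter fun i => MeasurableSet.iInter fun _ =>
    hmeas _ (measurableSet_singleton _)

include hmeas in
lemma measurable_firstOcc (ℓ : ℕ) :
    Measurable fun ω => firstOcc ℓ (fun i => η i ω) := by
  apply measurable_to_countable'
  intro t
  have hrw : (fun ω => firstOcc ℓ (fun i => η i ω)) ⁻¹' {t}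
      = ({ω | occAt ℓ (fun i => η i ω) t} ∩ ⋂ (j : ℕ) (_ : j < t),
          {ω | occAt ℓ (fun i => η i ω) j}ᶜ)
        ∪ ((⋂ j : ℕ, {ω | occAt ℓ (fun i => η i ω) j}ᶜ) ∩ {ω : Ω | t = 0}) := by
    ext ω
    simp only [Set.mem_preimage, Set.mem_singleton_iff, Set.mem_union, Set.mem_inter_iff,
      Set.mem_iInter, Set.mem_compl_iff, Set.mem_setOf_eq]
    rw [firstOcc_eq_sInf, nat_sInf_eq_iff]
    constructor
    · rintro (⟨h1, h2⟩ | ⟨h1, h2⟩)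
      · exact Or.inl ⟨h1, h2⟩
      · refine Or.inr ⟨fun j hj => ?_, h2⟩
        rw [Set.eq_empty_iff_forall_notMem] at h1
        exact h1 j hj
    · rintro (⟨h1, h2⟩ | ⟨h1, h2⟩)
      · exact Or.inl ⟨h1, h2⟩
      · exact Or.inr ⟨Set.eq_empty_iff_forall_notMem.2 h1, h2⟩
  rw [hrw]
  refine MeasurableSet.union ?_ ?_
  · exact (measurableSet_occAt η hmeas ℓ t).inter
      (MeasurableSet.iInter fun j => MeasurableSet.iInter fun _ =>
        (measurableSet_occAt η hmeas ℓ j).compl)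
  · exact (MeasurableSet.iInter fun j => (measurableSet_occAt η hmeas ℓ j).compl).inter
      (MeasurableSet.const _)

lemma lintegral_nat_eq {f : Ω → ℕ} (hf : Measurable f) :
    ∫⁻ ω, (f ω : ENNReal) ∂μ = ∑' m : ℕ, μ {ω | m < f ω} := by
  have h1 : ∀ ω, (f ω : ENNReal)
      = ∑' m : ℕ, Set.indicator {ω | m < f ω} (fun _ => (1 : ENNReal)) ω := by
    intro ω
    rw [tsum_eq_sum (s := Finset.range (f ω))
      (by
        intro m hm
        rw [Finset.mem_range] at hm
        exact Set.indicator_of_notMem (by simpa using hm) _)]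
    rw [Finset.sum_congr rfl (fun m hm => Set.indicator_of_mem
      (by simpa using Finset.mem_range.1 hm) _)]
    simp
  have hms : ∀ m : ℕ, MeasurableSet {ω | m < f ω} := fun m => hf trivial
  calc ∫⁻ ω, (f ω : ENNReal) ∂μ
      = ∫⁻ ω, ∑' m : ℕ, Set.indicator {ω | m < f ω} (fun _ => (1 : ENNReal)) ω ∂μ :=
        lintegral_congr h1
    _ = ∑' m : ℕ, ∫⁻ ω, Set.indicator {ω | m < f ω} (fun _ => (1 : ENNReal)) ω ∂μ :=
        lintegral_tsum (fun m => (measurable_const.indicator (hms m)).aemeasurable)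
    _ = ∑' m : ℕ, μ {ω | m < f ω} := by
        refine tsum_congr fun m => ?_
        rw [lintegral_indicator (hms m)]
        simp

end Meas
end Stmt6

open Stmt6
set_option linter.unnecessarySimpa false

/-- For the first occurrence times `T^{k-1}`, `T^k` of the nested patterns
`I_{ℓ₁}`, `I_{ℓ₂}` (`ℓ₁ < ℓ₂`): for every `t ≥ ℓ₂`,
`P(T^{k-1} = T^k = t) = β_k^{-1} P(T^{k-1} > t - ℓ₂)` with `β_k = 2^{ℓ₂}`,
and consequently `P(T^{k-1} = T^k) = β_k^{-1} E[T^{k-1}]`. -/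
theorem stmt6 {Ω : Type} [MeasurableSpace Ω] (μ : Measure Ω) [IsProbabilityMeasure μ]
    (ℓ₁ ℓ₂ : ℕ) (h1 : 1 ≤ ℓ₁) (h12 : ℓ₁ < ℓ₂)
    (η : ℕ → Ω → Bool) (hmeas : ∀ i, Measurable (η i))
    (hiid : ∀ (s : Finset ℕ) (b : ℕ → Bool),
      μ {ω | ∀ i ∈ s, η i ω = b i} = (1 / 2 : ENNReal) ^ s.card) :
    (∀ t : ℕ, ℓ₂ ≤ t →
      μ {ω | firstOcc ℓ₁ (fun i => η i ω) = t ∧ firstOcc ℓ₂ (fun i => η i ω) = t}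
        = (1 / 2 : ENNReal) ^ ℓ₂ * μ {ω | t - ℓ₂ < firstOcc ℓ₁ (fun i => η i ω)}) ∧
    (μ {ω | firstOcc ℓ₁ (fun i => η i ω) = firstOcc ℓ₂ (fun i => η i ω)}).toReal
      = ((2 : ℝ) ^ ℓ₂)⁻¹ * ∫ ω, (firstOcc ℓ₁ (fun i => η i ω) : ℝ) ∂μ := by
  have h2pos : 1 ≤ ℓ₂ := by omega
  have hpart1 : ∀ t : ℕ, ℓ₂ ≤ t →
      μ {ω | firstOcc ℓ₁ (fun i => η i ω) = t ∧ firstOcc ℓ₂ (fun i => η i ω) = t}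
        = (1 / 2 : ENNReal) ^ ℓ₂ * μ {ω | t - ℓ₂ < firstOcc ℓ₁ (fun i => η i ω)} := by
    intro t ht
    set P : (ℕ → Bool) → Prop := fun e => ∀ j ≤ t - ℓ₂, ¬ occAt ℓ₁ e j with hPdef
    have hdep : Stmt6.DependsOn P (Finset.range (t - ℓ₂ + 1)) := by
      intro e e' hag hPe j hj hocc
      exact hPe j hj (occAt_congr
        (fun m hm => (hag m (Finset.mem_range.2 (by omega))).symm) hocc)
    have hdisj : Disjoint (Finset.range (t - ℓ₂ + 1)) (Finset.Ioc (t - ℓ₂) t) := by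
      rw [Finset.disjoint_left]
      intro x hx hx'
      rw [Finset.mem_range] at hx
      rw [Finset.mem_Ioc] at hx'
      omega
    have hset1 : {ω | firstOcc ℓ₁ (fun i => η i ω) = t ∧ firstOcc ℓ₂ (fun i => η i ω) = t}
        = {ω | P (fun i => η i ω)}
            ∩ cyl η (Finset.Ioc (t - ℓ₂) t) (fun m => decide (m < t)) := by
      ext ω
      rw [Set.mem_setOf_eq, both_eq_iff h1 h12 ht]
      constructor
      · rintro ⟨hA, hW⟩
        exact ⟨hA, (occAt_iff_window h2pos ht).1 hW⟩
      · rintro ⟨hA, hW⟩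
        exact ⟨hA, (occAt_iff_window h2pos ht).2 hW⟩
    have hset2 : {ω | t - ℓ₂ < firstOcc ℓ₁ (fun i => η i ω)}
        = {ω | P (fun i => η i ω)} \ {ω | ∀ j, ¬ occAt ℓ₁ (fun i => η i ω) j} := by
      ext ω
      rw [Set.mem_setOf_eq, firstOcc_gt_iff]
      simp only [Set.mem_diff, Set.mem_setOf_eq, not_forall, not_not, hPdef]
      tauto
    have hcard : t - (t - ℓ₂) = ℓ₂ := by omega
    rw [hset1, hset2, mu_inter_cyl μ η hmeas hiid hdisj hdep,
      measure_diff_null (mu_noOcc μ η hmeas hiid h1), Nat.card_Ioc, hcard, mul_comm]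
  refine ⟨hpart1, ?_⟩
  set T₁ : Ω → ℕ := fun ω => firstOcc ℓ₁ (fun i => η i ω) with hT1def
  set T₂ : Ω → ℕ := fun ω => firstOcc ℓ₂ (fun i => η i ω) with hT2def
  have hT1 : Measurable T₁ := measurable_firstOcc η hmeas ℓ₁
  have hT2 : Measurable T₂ := measurable_firstOcc η hmeas ℓ₂
  set D : ℕ → Set Ω := fun t => {ω | T₁ ω = t ∧ T₂ ω = t} with hDdef
  have hDm : ∀ t, MeasurableSet (D t) := fun t =>
    (hT1 (measurableSet_singleton t)).inter (hT2 (measurableSet_singleton t))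
  have hU : {ω | T₁ ω = T₂ ω} = ⋃ t, D t := by
    ext ω
    simp only [Set.mem_setOf_eq, Set.mem_iUnion, hDdef]
    exact ⟨fun h => ⟨T₂ ω, h, rfl⟩, fun ⟨t, ha, hb⟩ => by rw [ha, hb]⟩
  have hpd : Pairwise (Function.onFun Disjoint D) := by
    intro t t' htt'
    rw [Function.onFun, Set.disjoint_left]
    rintro ω ⟨ha, -⟩ ⟨hb, -⟩
    exact htt' (ha ▸ hb ▸ rfl)
  have hzero : ∀ t, t < ℓ₂ → μ (D t) = 0 := by
    intro t ht
    rcases Nat.eq_zero_or_pos t with rfl | htpos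
    · refine le_antisymm ?_ zero_le
      rw [← mu_noOcc μ η hmeas hiid h1]
      refine measure_mono ?_
      rintro ω ⟨hω, -⟩
      exact (firstOcc_eq_zero_iff h1).1 hω
    · have hD : D t = ∅ := by
        ext ω
        simp only [hDdef, Set.mem_setOf_eq, Set.mem_empty_iff_false, iff_false, not_and]
        intro _ h2'
        have := ((firstOcc_eq_iff (by omega)).1 h2').1.1
        omega
      rw [hD, measure_empty]
  have hre : ∑' m : ℕ, μ (D (m + ℓ₂)) = ∑' t, μ (D t) := by
    refine Function.Injective.tsum_eq (g := fun m => m + ℓ₂)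
      (f := fun t => μ (D t)) (add_left_injective ℓ₂) ?_
    intro t ht
    rcases le_or_gt ℓ₂ t with h | h
    · exact ⟨t - ℓ₂, by simpa using (by omega : t - ℓ₂ + ℓ₂ = t)⟩
    · exact absurd (hzero t h) ht
  have hterm : ∀ m : ℕ, μ (D (m + ℓ₂))
      = (1 / 2 : ENNReal) ^ ℓ₂ * μ {ω | m < T₁ ω} := by
    intro m
    have := hpart1 (m + ℓ₂) (by omega)
    simpa only [Nat.add_sub_cancel] using this
  have hmain : μ {ω | T₁ ω = T₂ ω}
      = (1 / 2 : ENNReal) ^ ℓ₂ * ∫⁻ ω, (T₁ ω : ENNReal) ∂μ := by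
    rw [hU, measure_iUnion hpd hDm, ← hre, tsum_congr hterm, ENNReal.tsum_mul_left,
      ← lintegral_nat_eq μ hT1]
  have hInt : ∫ ω, (T₁ ω : ℝ) ∂μ = (∫⁻ ω, (T₁ ω : ENNReal) ∂μ).toReal := by
    have hsm : AEStronglyMeasurable (fun ω => ((T₁ ω : ℝ))) μ :=
      (measurable_from_nat.comp hT1).aestronglyMeasurable
    have hnn : 0 ≤ᵐ[μ] fun ω => ((T₁ ω : ℝ)) :=
      Filter.Eventually.of_forall fun ω => by
        simpa using (Nat.cast_nonneg (T₁ ω) : (0 : ℝ) ≤ _)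
    rw [integral_eq_lintegral_of_nonneg_ae hnn hsm]
    congr 1
    exact lintegral_congr fun ω => by rw [ENNReal.ofReal_natCast]
  rw [hmain, ENNReal.toReal_mul, hInt]
  congr 1
  rw [ENNReal.toReal_pow]
  rw [show ((1 : ENNReal) / 2).toReal = (2 : ℝ)⁻¹ by simp [ENNReal.toReal_div]]
  rw [inv_pow]
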